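/- arXiv:2203.12051 — 2 statements merged into one kernel-verified Lean document; each statement's English description precedes it below -/
import Mathlib

section
/- Let p ∈ L^∞(ℝⁿ) with group of periods G = {e : p(·+e) = p a.e.}, and let H be a maximal linear subspace contained in G. If there exists a unit vector ξ ∈ H^⊥ and a sequence h_k ∈ G ∩ H^⊥ with h_k ≠ 0, h_k → 0, and h_k/|h_k| → ξ, then for every α ∈ ℝ one has p(x + αξ) = p(x) a.e., i.e., ℝξ ⊆ G, contradicting maximality of H. Consequently, L₀ = G ∩ H^⊥ is a discrete subgroup (a lattice) of H^⊥. -/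
open MeasureTheory Filter

section Aux

open scoped Convolution
open Metric

variable {n : ℕ}

private lemma ae_shift (c : EuclideanSpace ℝ (Fin n)) {P : EuclideanSpace ℝ (Fin n) → Prop}
    (h : ∀ᵐ x ∂volume, P x) : ∀ᵐ x ∂volume, P (x + c) :=
  (measurePreserving_add_right volume c).quasiMeasurePreserving.ae h

private lemma ae_subrev (c : EuclideanSpace ℝ (Fin n)) {P : EuclideanSpace ℝ (Fin n) → Prop}
    (h : ∀ᵐ x ∂volume, P x) : ∀ᵐ x ∂volume, P (c - x) :=
  (Measure.measurePreserving_sub_left volume c).quasiMeasurePreserving.ae h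

/-- The set of a.e. periods as an additive subgroup. -/
private noncomputable def perGroup (p : EuclideanSpace ℝ (Fin n) → ℝ) :
    AddSubgroup (EuclideanSpace ℝ (Fin n)) where
  carrier := {e | ∀ᵐ x ∂volume, p (x + e) = p x}
  zero_mem' := by simp
  add_mem' := by
    intro e f he hf
    simp only [Set.mem_setOf_eq] at he hf ⊢
    have he' : ∀ᵐ x ∂volume, p (x + f + e) = p (x + f) := ae_shift f he
    filter_upwards [he', hf] with x h1 h2
    calc p (x + (e + f)) = p (x + f + e) := by rw [add_assoc, add_comm e f]
    _ = p (x + f) := h1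
    _ = p x := h2
  neg_mem' := by
    intro e he
    simp only [Set.mem_setOf_eq] at he ⊢
    have he' : ∀ᵐ x ∂volume, p (x + -e + e) = p (x + -e) := ae_shift (-e) he
    filter_upwards [he'] with x h1
    have : x + -e + e = x := by abel
    rw [this] at h1
    exact h1.symm

/-- Closedness of the group of a.e. periods of a bounded measurable function,
proved by mollification. -/
private lemma per_closed {p : EuclideanSpace ℝ (Fin n) → ℝ} (hmeas : Measurable p)
    {C : ℝ} (hbd : ∀ x, |p x| ≤ C) {e : EuclideanSpace ℝ (Fin n)}
    {u : ℕ → EuclideanSpace ℝ (Fin n)} (hu : ∀ k, u k ∈ perGroup p)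
    (hlim : Tendsto u atTop (nhds e)) : e ∈ perGroup p := by
  -- local integrability
  have hploc : LocallyIntegrable p volume := by
    intro x
    refine ⟨ball x 1, ball_mem_nhds x one_pos, ?_, ?_⟩
    · exact hmeas.aestronglyMeasurable.restrict
    · refine HasFiniteIntegral.restrict_of_bounded (C := C) measure_ball_lt_top ?_
      filter_upwards with y using by simpa [Real.norm_eq_abs] using hbd y
  -- bump functions
  set φ : ℕ → ContDiffBump (0 : EuclideanSpace ℝ (Fin n)) := fun k =>
    ⟨((k : ℝ) + 1)⁻¹, 2 * ((k : ℝ) + 1)⁻¹, by positivity, by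
      nlinarith [inv_pos.mpr (show (0:ℝ) < (k : ℝ) + 1 by positivity)]⟩ with hφdef
  have hφrOut : Tendsto (fun k => (φ k).rOut) atTop (nhds 0) := by
    have : Tendsto (fun k : ℕ => 2 * ((k : ℝ) + 1)⁻¹) atTop (nhds (2 * 0)) :=
      (tendsto_one_div_add_atTop_nhds_zero_nat.congr (by simp [one_div])).const_mul 2
    simpa using this
  set conv : ℕ → EuclideanSpace ℝ (Fin n) → ℝ := fun k =>
    (φ k).normed volume ⋆[ContinuousLinearMap.lsmul ℝ ℝ, volume] p with hconvdef
  have hcont : ∀ k, Continuous (conv k) := fun k =>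
    (φ k).hasCompactSupport_normed.continuous_convolution_left _ ((φ k).continuous_normed) hploc
  -- periodicity of the convolutions
  have hper : ∀ k, ∀ a ∈ perGroup p, ∀ x, conv k (x + a) = conv k x := by
    intro k a ha x
    have ha' : ∀ᵐ t ∂volume, p (x - t + a) = p (x - t) := ae_subrev x ha
    simp only [hconvdef, convolution_def]
    refine integral_congr_ae ?_
    filter_upwards [ha'] with t ht
    have : x + a - t = x - t + a := by abel
    rw [this, ht]
  -- periodicity extends to `e` by continuity
  have hper_e : ∀ k x, conv k (x + e) = conv k x := by
    intro k x
    have h1 : Tendsto (fun j => conv k (x + u j)) atTop (nhds (conv k (x + e))) :=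
      ((hcont k).tendsto _).comp (tendsto_const_nhds.add hlim)
    have h2 : (fun j => conv k (x + u j)) = fun _ => conv k x := by
      funext j; exact hper k (u j) (hu j) x
    rw [h2] at h1
    exact (tendsto_const_nhds_iff.mp h1).symm
  -- a.e. convergence of the convolutions to p
  have hae : ∀ᵐ x ∂volume, Tendsto (fun k => conv k x) atTop (nhds (p x)) := by
    refine ContDiffBump.ae_convolution_tendsto_right_of_locallyIntegrable (K := 2)
      hφrOut ?_ hploc
    filter_upwards with k
    simp [hφdef]
  have hae' : ∀ᵐ x ∂volume, Tendsto (fun k => conv k (x + e)) atTop (nhds (p (x + e))) :=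
    ae_shift e hae
  filter_upwards [hae, hae'] with x hx hx'
  have : Tendsto (fun k => conv k x) atTop (nhds (p (x + e))) := by
    refine hx'.congr fun k => hper_e k x
  exact tendsto_nhds_unique this hx

end Aux

/-- If `H` is a maximal linear subspace contained in the group `G` of
a.e.-periods of `p ∈ L^∞(ℝⁿ)`, and a unit vector `ξ ∈ H^⊥` is a limit of normalized
nonzero elements `h_k ∈ G ∩ H^⊥` with `h_k → 0`, then `ℝξ ⊆ G` (contradicting
maximality); consequently `L₀ = G ∩ H^⊥` is a discrete subgroup of `H^⊥`. -/
theorem periods_lattice_discrete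
    (n : ℕ) (p : EuclideanSpace ℝ (Fin n) → ℝ) (hmeas : Measurable p)
    (C : ℝ) (hbd : ∀ x, |p x| ≤ C)
    (G : Set (EuclideanSpace ℝ (Fin n)))
    (hG : G = {e | ∀ᵐ x ∂volume, p (x + e) = p x})
    (H : Submodule ℝ (EuclideanSpace ℝ (Fin n)))
    (hHG : (H : Set (EuclideanSpace ℝ (Fin n))) ⊆ G)
    (hmax : ∀ H' : Submodule ℝ (EuclideanSpace ℝ (Fin n)),
      (H' : Set (EuclideanSpace ℝ (Fin n))) ⊆ G → H ≤ H' → H' = H) :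
    (∀ ξ : EuclideanSpace ℝ (Fin n), ξ ∈ Hᗮ → ‖ξ‖ = 1 →
      ∀ h : ℕ → EuclideanSpace ℝ (Fin n),
        (∀ k, h k ∈ G ∧ h k ∈ Hᗮ ∧ h k ≠ 0) →
        Tendsto h atTop (nhds 0) →
        Tendsto (fun k => ‖h k‖⁻¹ • h k) atTop (nhds ξ) →
        ∀ α : ℝ, (∀ᵐ x ∂volume, p (x + α • ξ) = p x) ∧ α • ξ ∈ G) ∧
    (∃ δ : ℝ, 0 < δ ∧ ∀ e ∈ G, e ∈ Hᗮ → ‖e‖ < δ → e = 0) := by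
  have hGper : ∀ e, e ∈ G ↔ e ∈ perGroup p := by
    intro e; rw [hG]; rfl
  -- Part 1
  have key : ∀ ξ : EuclideanSpace ℝ (Fin n), ξ ∈ Hᗮ → ‖ξ‖ = 1 →
      ∀ h : ℕ → EuclideanSpace ℝ (Fin n),
        (∀ k, h k ∈ G ∧ h k ∈ Hᗮ ∧ h k ≠ 0) →
        Tendsto h atTop (nhds 0) →
        Tendsto (fun k => ‖h k‖⁻¹ • h k) atTop (nhds ξ) →
        ∀ α : ℝ, (∀ᵐ x ∂volume, p (x + α • ξ) = p x) ∧ α • ξ ∈ G := by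
    intro ξ hξperp hξnorm h hcond h0 hdir α
    have htne : ∀ k, ‖h k‖ ≠ 0 := fun k => norm_ne_zero_iff.mpr (hcond k).2.2
    have htz : Tendsto (fun k => ‖h k‖) atTop (nhds 0) := by
      simpa using h0.norm
    set z : ℕ → ℤ := fun k => round (α / ‖h k‖) with hz
    set c : ℕ → ℝ := fun k => (z k : ℝ) * ‖h k‖ with hc
    have hcbound : ∀ k, |c k - α| ≤ ‖h k‖ / 2 := by
      intro k
      have : c k - α = (α / ‖h k‖ - (z k : ℝ)) * -‖h k‖ := by
        have h1 : α / ‖h k‖ * ‖h k‖ = α := div_mul_cancel₀ α (htne k)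
        simp only [hc]
        nlinarith [h1]
      rw [this, abs_mul, abs_neg, abs_norm]
      have := abs_sub_round (α / ‖h k‖)
      calc |α / ‖h k‖ - (z k : ℝ)| * ‖h k‖ ≤ (1 / 2) * ‖h k‖ := by
            apply mul_le_mul_of_nonneg_right this (norm_nonneg _)
      _ = ‖h k‖ / 2 := by ring
    have hcα : Tendsto c atTop (nhds α) := by
      rw [← tendsto_sub_nhds_zero_iff]
      refine squeeze_zero_norm hcbound ?_
      simpa using htz.div_const 2
    have hmper : ∀ k, z k • h k ∈ perGroup p :=
      fun k => zsmul_mem ((hGper _).mp (hcond k).1) (z k)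
    have hmeq : ∀ k, z k • h k = c k • (‖h k‖⁻¹ • h k) := by
      intro k
      rw [smul_smul, hc, mul_assoc, mul_inv_cancel₀ (htne k), mul_one,
        Int.cast_smul_eq_zsmul]
    have hmlim : Tendsto (fun k => z k • h k) atTop (nhds (α • ξ)) := by
      have := hcα.smul hdir
      refine Tendsto.congr (fun k => (hmeq k).symm) this
    have : α • ξ ∈ perGroup p := per_closed hmeas hbd hmper hmlim
    exact ⟨this, (hGper _).mpr this⟩
  refine ⟨key, ?_⟩
  -- Part 2
  by_contra hcon
  push_neg at hcon
  choose e he1 he2 he3 he4 using fun k : ℕ => hcon (1 / ((k : ℝ) + 1)) (by positivity)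
  set u : ℕ → EuclideanSpace ℝ (Fin n) := fun k => ‖e k‖⁻¹ • e k with hu
  have hene : ∀ k, ‖e k‖ ≠ 0 := fun k => norm_ne_zero_iff.mpr (he4 k)
  have huK : ∀ k, u k ∈ Metric.sphere (0 : EuclideanSpace ℝ (Fin n)) 1 ∩ (Hᗮ : Set _) := by
    intro k
    constructor
    · simp [hu, norm_smul, abs_of_nonneg (inv_nonneg.mpr (norm_nonneg (e k))),
        inv_mul_cancel₀ (hene k)]
    · exact Hᗮ.smul_mem _ (he2 k)
  have hKcomp : IsCompact (Metric.sphere (0 : EuclideanSpace ℝ (Fin n)) 1 ∩ (Hᗮ : Set _)) :=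
    (isCompact_sphere 0 1).inter_right Hᗮ.closed_of_finiteDimensional
  obtain ⟨ξ, hξK, ψ, hψ, hψlim⟩ := hKcomp.tendsto_subseq huK
  have hξnorm : ‖ξ‖ = 1 := by simpa using hξK.1
  have hξperp : ξ ∈ Hᗮ := hξK.2
  -- the subsequence tends to 0
  have heψ0 : Tendsto (e ∘ ψ) atTop (nhds 0) := by
    rw [tendsto_zero_iff_norm_tendsto_zero]
    refine squeeze_zero (g := fun k : ℕ => 1 / ((k : ℝ) + 1)) (fun k => norm_nonneg _)
      (fun k => ?_) tendsto_one_div_add_atTop_nhds_zero_nat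
    refine le_trans (he3 (ψ k)).le (one_div_le_one_div_of_le (by positivity) ?_)
    have : (k : ℝ) ≤ (ψ k : ℝ) := Nat.cast_le.mpr hψ.le_apply
    linarith
  have := key ξ hξperp hξnorm (e ∘ ψ)
    (fun k => ⟨he1 (ψ k), he2 (ψ k), he4 (ψ k)⟩) heψ0
    (by simpa [hu, Function.comp_def] using hψlim)
  -- span ξ consists of periods
  set H' : Submodule ℝ (EuclideanSpace ℝ (Fin n)) := H ⊔ (Submodule.span ℝ {ξ}) with hH'
  have hH'G : (H' : Set (EuclideanSpace ℝ (Fin n))) ⊆ G := by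
    intro x hx
    rw [SetLike.mem_coe, hH', Submodule.mem_sup] at hx
    obtain ⟨y, hy, w, hw, rfl⟩ := hx
    obtain ⟨β, rfl⟩ := Submodule.mem_span_singleton.mp hw
    have h1 : y ∈ perGroup p := (hGper _).mp (hHG hy)
    have h2 : β • ξ ∈ perGroup p := (hGper _).mp (this β).2
    exact (hGper _).mpr (add_mem h1 h2)
  have hH'H : H' = H := hmax H' hH'G le_sup_left
  have hξH : ξ ∈ H := by
    rw [← hH'H, hH', Submodule.mem_sup]
    exact ⟨0, zero_mem _, ξ, Submodule.mem_span_singleton_self ξ, (zero_add ξ)⟩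
  have : ξ = 0 := by
    have h0 := (Submodule.mem_orthogonal Hᗮ ξ).mp ?_ ξ hξperp
    · exact inner_self_eq_zero.mp h0
    · exact Submodule.le_orthogonal_orthogonal H hξH
  rw [this] at hξnorm
  simp at hξnorm
end

section
/- Let u₀(x) = m + v(pr(x)) + (δ/2) sin(2π ξ·x / r), where v : E → ℝ is continuous with group of periods exactly G₁ ⊆ E, E = {x : ξ·x = 0} is a hyperplane, pr is the projection onto E along a vector e₀ with ξ·e₀ = r, and v has zero mean over its periodicity cell. Then the group of periods of u₀ is exactly G = G₁ + ℤe₀: every period e of u₀ decomposes as e = e₁ + λe₀ with e₁ ∈ G₁ and λ ∈ ℤ. -/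
open Matrix

/-- The function
`u₀(x) = m + v(pr x) + (δ/2) sin(2π ξ·x / r)`, where `v` is continuous on the hyperplane
`E = {ξ·x = 0}` with group of periods (within `E`) exactly `G₁`, and
`pr x = x − ((ξ·x)/r) e₀` is the projection onto `E` along `e₀` (`ξ·e₀ = r`), has group
of periods exactly `G = G₁ + ℤe₀`: a vector `e` is a period of `u₀` iff `e = e₁ + λe₀`
with `e₁ ∈ G₁`, `λ ∈ ℤ`. -/
theorem periods_of_perturbed_initial_data
    (n : ℕ) (ξ e₀ : Fin n → ℝ) (hξ : ξ ≠ 0)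
    (r : ℕ) (hr : 0 < r) (hξe₀ : ξ ⬝ᵥ e₀ = (r : ℝ))
    (m δ : ℝ) (hδ : 0 < δ)
    (v : (Fin n → ℝ) → ℝ) (hv : Continuous v)
    (C : ℝ) (hbd : ∀ x, |v x| ≤ C)
    (G₁ : Set (Fin n → ℝ))
    (hG₁ : ∀ e, e ∈ G₁ ↔ (ξ ⬝ᵥ e = 0 ∧ ∀ x, ξ ⬝ᵥ x = 0 → v (x + e) = v x)) :
    let u₀ : (Fin n → ℝ) → ℝ := fun x =>
      m + v (x - ((ξ ⬝ᵥ x) / r) • e₀) + δ / 2 * Real.sin (2 * Real.pi * (ξ ⬝ᵥ x) / r)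
    ∀ e : Fin n → ℝ,
      (∀ x, u₀ (x + e) = u₀ x) ↔ ∃ e₁ ∈ G₁, ∃ l : ℤ, e = e₁ + (l : ℝ) • e₀ := by
  intro u₀ e
  have hrne : (r : ℝ) ≠ 0 := by positivity
  have hδne : δ ≠ 0 := ne_of_gt hδ
  constructor
  · intro hper
    set lam : ℝ := (ξ ⬝ᵥ e) / r with hlam
    -- evaluate at x = s • e₀
    have h1 : ∀ s : ℝ, v (e - lam • e₀) + δ / 2 * Real.sin (2 * Real.pi * (s + lam))
        = v 0 + δ / 2 * Real.sin (2 * Real.pi * s) := by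
      intro s
      have := hper (s • e₀)
      simp only [u₀, dotProduct_add, dotProduct_smul, smul_eq_mul, hξe₀] at this
      have harg : 2 * Real.pi * (s * r + ξ ⬝ᵥ e) / r = 2 * Real.pi * (s + lam) := by
        rw [hlam]; field_simp
      have hvec : s • e₀ + e - ((s * r + ξ ⬝ᵥ e) / r) • e₀ = e - lam • e₀ := by
        rw [hlam]
        have h : (s * r + ξ ⬝ᵥ e) / r = s + (ξ ⬝ᵥ e) / r := by field_simp
        rw [h, add_smul]
        abel
      have hvec0 : s • e₀ - (s * r / r) • e₀ = 0 := by
        rw [mul_div_assoc, div_self hrne, mul_one]; abel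
      rw [harg, hvec, hvec0] at this
      have harg0 : 2 * Real.pi * (s * r) / r = 2 * Real.pi * s := by
        field_simp
      rw [harg0] at this
      linarith [this]
    -- deduce sin(2πλ) = 0, then cos(2πλ) = 1, hence λ ∈ ℤ
    have h0 := h1 0
    have hhalf := h1 (1/2)
    rw [show 2 * Real.pi * (1/2 + lam) = 2 * Real.pi * lam + Real.pi by ring,
      Real.sin_add_pi, show 2 * Real.pi * (1/2:ℝ) = Real.pi by ring, Real.sin_pi] at hhalf
    rw [show 2 * Real.pi * ((0:ℝ) + lam) = 2 * Real.pi * lam by ring] at h0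
    simp only [mul_zero, Real.sin_zero] at h0
    have hsin : Real.sin (2 * Real.pi * lam) = 0 := by nlinarith
    have hq := h1 (1/4)
    rw [show 2 * Real.pi * (1/4 + lam) = 2 * Real.pi * lam + Real.pi/2 by ring,
      Real.sin_add_pi_div_two, show 2 * Real.pi * (1/4:ℝ) = Real.pi/2 by ring,
      Real.sin_pi_div_two] at hq
    have hcos : Real.cos (2 * Real.pi * lam) = 1 := by nlinarith
    obtain ⟨k, hk⟩ := (Real.cos_eq_one_iff _).mp hcos
    have hπ : (0:ℝ) < Real.pi := Real.pi_pos
    have hlamk : lam = (k : ℝ) := by nlinarith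
    refine ⟨e - lam • e₀, ?_, k, ?_⟩
    · rw [hG₁]
      constructor
      · have : ξ ⬝ᵥ (e - lam • e₀) = ξ ⬝ᵥ e - lam * r := by
          simp [dotProduct_sub, dotProduct_smul, smul_eq_mul, hξe₀]
        rw [this, hlam, div_mul_cancel₀ _ hrne, sub_self]
      · intro x hx
        have := hper x
        simp only [u₀, dotProduct_add, hx, zero_add] at this
        have harg : 2 * Real.pi * (ξ ⬝ᵥ e) / r = 2 * Real.pi * lam := by
          rw [hlam]; ring
        have hvec : x + e - ((ξ ⬝ᵥ e) / r) • e₀ = x + (e - lam • e₀) := by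
          rw [hlam]; abel
        have hx0 : x - ((0:ℝ) / r) • e₀ = x := by
          simp
        rw [harg, hvec, hx0, hsin] at this
        simpa using this
    · rw [hlamk]; abel
  · rintro ⟨e₁, he₁, l, rfl⟩
    obtain ⟨he₁0, he₁per⟩ := (hG₁ e₁).mp he₁
    intro x
    simp only [u₀, dotProduct_add, dotProduct_smul, smul_eq_mul, hξe₀, he₁0]
    have harg : 2 * Real.pi * (ξ ⬝ᵥ x + (0 + l * r)) / r
        = 2 * Real.pi * (ξ ⬝ᵥ x) / r + (l : ℤ) * (2 * Real.pi) := by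
      field_simp; ring
    have hvec : x + (e₁ + (l:ℝ) • e₀) - ((ξ ⬝ᵥ x + (0 + (l:ℝ) * r)) / r) • e₀
        = x - ((ξ ⬝ᵥ x) / r) • e₀ + e₁ := by
      have h : (ξ ⬝ᵥ x + (0 + (l:ℝ) * r)) / r = (ξ ⬝ᵥ x) / r + l := by field_simp; ring
      rw [h, add_smul]
      abel
    rw [harg, hvec, Real.sin_add_int_mul_two_pi,
      he₁per _ (by
        have h : ξ ⬝ᵥ (x - ((ξ ⬝ᵥ x) / r) • e₀) = ξ ⬝ᵥ x - (ξ ⬝ᵥ x) / r * r := by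
          simp [dotProduct_sub, dotProduct_smul, smul_eq_mul, hξe₀]
        rw [h, div_mul_cancel₀ _ hrne, sub_self])]
end
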